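/- Buzen's recursion computes the normalizing constant: for n ≥ 2 clients and m ≥ 1 tasks, Z_{n,m} = Z_{n-1,m} + (p_n/μ_n) · Z_{n,m-1}, where Z_{ν,μ} = Σ_{x ∈ X_{ν,μ}} Π_{i=1}^{ν} (p_i/μ_i)^{x_i} and X_{ν,μ} is the set of vectors in ℕ^ν with ℓ1-norm μ. -/
import Mathlib


open Finset

/-- Normalizing constant of the closed Jackson network with `ν` clients and `μm` tasks:
`Z ν μm = Σ_{x ∈ ℕ^ν, |x|₁ = μm} Π_{i<ν} (p i / μ i)^(x i)`. -/
noncomputable def buzenZ (p μ : ℕ → ℝ) (ν μm : ℕ) : ℝ :=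
  ∑ x ∈ Finset.Nat.antidiagonalTuple ν μm, ∏ i : Fin ν, (p (i : ℕ) / μ (i : ℕ)) ^ (x i)

lemma buzen_rec_aux (p μ : ℕ → ℝ) (ν k : ℕ) :
    buzenZ p μ (ν + 1) (k + 1)
      = buzenZ p μ ν (k + 1) + (p ν / μ ν) * buzenZ p μ (ν + 1) k := by
  classical
  set r : ℕ → ℝ := fun i => p i / μ i with hr
  unfold buzenZ
  rw [← Finset.sum_filter_add_sum_filter_not (Finset.Nat.antidiagonalTuple (ν + 1) (k + 1))
    (fun x => x (Fin.last ν) = 0)]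
  congr 1
  · -- part with last coordinate 0
    refine Finset.sum_nbij' (fun x => Fin.init x) (fun y => Fin.snoc y 0) ?_ ?_ ?_ ?_ ?_
    · intro x hx
      simp only [Finset.mem_filter, Finset.Nat.mem_antidiagonalTuple] at hx ⊢
      obtain ⟨hs, h0⟩ := hx
      rw [Fin.sum_univ_castSucc, h0, add_zero] at hs
      exact hs
    · intro y hy
      simp only [Finset.Nat.mem_antidiagonalTuple] at hy
      simp only [Finset.mem_filter, Finset.Nat.mem_antidiagonalTuple]
      constructor
      · rw [Fin.sum_univ_castSucc]
        simp [hy]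
      · simp
    · intro x hx
      simp only [Finset.mem_filter] at hx
      rw [← hx.2]
      exact Fin.snoc_init_self x
    · intro y hy
      simp
    · intro x hx
      simp only [Finset.mem_filter] at hx
      rw [Fin.prod_univ_castSucc, hx.2]
      simp [Fin.init]
  · -- part with last coordinate ≥ 1
    rw [Finset.mul_sum]
    refine Finset.sum_nbij' (fun x => Function.update x (Fin.last ν) (x (Fin.last ν) - 1))
      (fun y => Function.update y (Fin.last ν) (y (Fin.last ν) + 1)) ?_ ?_ ?_ ?_ ?_
    · intro x hx
      simp only [Finset.mem_filter, Finset.Nat.mem_antidiagonalTuple] at hx ⊢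
      obtain ⟨hs, h0⟩ := hx
      rw [Fin.sum_univ_castSucc] at hs ⊢
      have h1 : 1 ≤ x (Fin.last ν) := Nat.one_le_iff_ne_zero.mpr h0
      have hc : ∀ i : Fin ν,
          Function.update x (Fin.last ν) (x (Fin.last ν) - 1) i.castSucc = x i.castSucc := by
        intro i
        exact Function.update_of_ne (by simp [Fin.ext_iff, i.is_lt.ne]) _ x
      rw [Finset.sum_congr rfl (fun i _ => hc i), Function.update_self]
      omega
    · intro y hy
      simp only [Finset.Nat.mem_antidiagonalTuple] at hy
      simp only [Finset.mem_filter, Finset.Nat.mem_antidiagonalTuple]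
      have hc : ∀ i : Fin ν,
          Function.update y (Fin.last ν) (y (Fin.last ν) + 1) i.castSucc = y i.castSucc := by
        intro i
        exact Function.update_of_ne (by simp [Fin.ext_iff, i.is_lt.ne]) _ y
      constructor
      · rw [Fin.sum_univ_castSucc, Finset.sum_congr rfl (fun i _ => hc i), Function.update_self]
        rw [Fin.sum_univ_castSucc] at hy
        omega
      · simp
    · intro x hx
      simp only [Finset.mem_filter] at hx
      have h1 : 1 ≤ x (Fin.last ν) := Nat.one_le_iff_ne_zero.mpr hx.2
      funext i
      rcases eq_or_ne i (Fin.last ν) with h | h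
      · subst h; simp [Function.update_self]; omega
      · simp [Function.update_of_ne h]
    · intro y hy
      funext i
      rcases eq_or_ne i (Fin.last ν) with h | h
      · subst h; simp [Function.update_self]
      · simp [Function.update_of_ne h]
    · intro x hx
      simp only [Finset.mem_filter, Finset.Nat.mem_antidiagonalTuple] at hx
      have h1 : 1 ≤ x (Fin.last ν) := Nat.one_le_iff_ne_zero.mpr hx.2
      beta_reduce
      rw [Fin.prod_univ_castSucc, Fin.prod_univ_castSucc]
      have hc : ∀ i : Fin ν,
          Function.update x (Fin.last ν) (x (Fin.last ν) - 1) i.castSucc = x i.castSucc := by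
        intro i
        exact Function.update_of_ne (by simp [Fin.ext_iff, i.is_lt.ne]) _ x
      simp only [hc, Function.update_self]
      have : (r ν) ^ x (Fin.last ν) = r ν * (r ν) ^ (x (Fin.last ν) - 1) := by
        conv_lhs => rw [show x (Fin.last ν) = (x (Fin.last ν) - 1) + 1 by omega]
        ring
      simp only [Fin.val_last, ← hr]
      rw [this]
      ring

/-- Buzen's recursion: for `n ≥ 2` clients and `m ≥ 1` tasks,
`Z_{n,m} = Z_{n-1,m} + (p_n/μ_n) · Z_{n,m-1}`. -/
theorem buzen_recursion (n m : ℕ) (hn : 2 ≤ n) (hm : 1 ≤ m)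
    (p μ : ℕ → ℝ) (hp : ∀ i, 0 < p i) (hμ : ∀ i, 0 < μ i) :
    buzenZ p μ n m
      = buzenZ p μ (n - 1) m + (p (n - 1) / μ (n - 1)) * buzenZ p μ n (m - 1) := by
  obtain ⟨ν, rfl⟩ : ∃ ν, n = ν + 1 := ⟨n - 1, by omega⟩
  obtain ⟨k, rfl⟩ : ∃ k, m = k + 1 := ⟨m - 1, by omega⟩
  simpa using buzen_rec_aux p μ ν k
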